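/- Let p₁, p₂ : Quiver.Path u v be two simple paths with the same endpoints. If Φ p₁ = Φ p₂ (as functions obj u × S → obj v × S), then Ψ p₁ = Ψ p₂ (as functions List (obj u) × S → List (obj v) × S). In other words, on simple paths the value of Φ fully determines the value of Ψ. -/

import Mathlib

noncomputable section

/-- The type of all arrows of a quiver. -/
abbrev QArr (V : Type) [Quiver.{0} V] : Type := Σ x : V, Σ y : V, x ⟶ y

section STC

variable {V : Type} [Quiver.{0} V] (obj : V → Type) (st : QArr V → Type)

/-- The global state: one state component per arrow. -/
abbrev GState : Type := ∀ e : QArr V, st e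

open Classical in
/-- Update the `e`-component of the global state, leaving the others unchanged. -/
def updState (σ : GState st) (e : QArr V) (x : st e) : GState st :=
  fun e' => if h : e' = e then cast (congrArg st h).symm x else σ e'

variable (φ : ∀ e : QArr V, obj e.1 × st e → obj e.2.1 × st e)

/-- The extension `φ* e` of the fundamental state thread `φ e` to the global state. -/
def phiExt (e : QArr V) : obj e.1 × GState st → obj e.2.1 × GState st :=
  fun z =>
    let r := φ e (z.1, z.2 e)
    (r.1, updState st z.2 e r.2)

/-- `Φ p` : composite of the extensions `φ*` along the arrows of the path `p`. -/
def Phi {u : V} : ∀ {v : V}, Quiver.Path u v → (obj u × GState st → obj v × GState st)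
  | _, .nil => id
  | _, .cons p e => fun z => phiExt obj st φ ⟨_, _, e⟩ (Phi p z)

/-- `ψ e` (curried auxiliary version): the stateful list map of `φ e`. -/
def psiAux (e : QArr V) : List (obj e.1) → st e → List (obj e.2.1) × st e
  | [], σ => ([], σ)
  | x :: xs, σ =>
    let r := φ e (x, σ)
    let r' := psiAux e xs r.2
    (r.1 :: r'.1, r'.2)

/-- `ψ e` : the stateful list map of the fundamental state thread `φ e`. -/
def psi (e : QArr V) : List (obj e.1) × st e → List (obj e.2.1) × st e :=
  fun z => psiAux obj st φ e z.1 z.2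

/-- The extension `ψ* e` of `ψ e` to the global state. -/
def psiExt (e : QArr V) : List (obj e.1) × GState st → List (obj e.2.1) × GState st :=
  fun z =>
    let r := psi obj st φ e (z.1, z.2 e)
    (r.1, updState st z.2 e r.2)

/-- `Ψ p` : composite of the extensions `ψ*` along the arrows of the path `p`. -/
def Psi {u : V} : ∀ {v : V}, Quiver.Path u v → (List (obj u) × GState st → List (obj v) × GState st)
  | _, .nil => id
  | _, .cons p e => fun z => psiExt obj st φ ⟨_, _, e⟩ (Psi p z)

/-- The list of arrows (as elements of `QArr V`) occurring in a path. -/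
def pathArrows {u : V} : ∀ {v : V}, Quiver.Path u v → List (QArr V)
  | _, .nil => []
  | _, .cons p e => ⟨_, _, e⟩ :: pathArrows p

/-- A path is simple if its arrows are pairwise distinct as elements of `QArr V`. -/
def SimplePath {u v : V} (p : Quiver.Path u v) : Prop := (pathArrows p).Nodup

/-- The stateful list map of a function `F : α × S → β × S` (auxiliary curried form). -/
def stmapAux {α β S : Type} (F : α × S → β × S) : List α → S → List β × S
  | [], σ => ([], σ)
  | x :: xs, σ =>
    let r := F (x, σ)
    let r' := stmapAux F xs r.2
    (r.1 :: r'.1, r'.2)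

/-- The stateful list map of a function `F : α × S → β × S`. -/
def stmap {α β S : Type} (F : α × S → β × S) : List α × S → List β × S :=
  fun z => stmapAux F z.1 z.2

end STC

section MyAux

variable {V : Type} [Quiver.{0} V] {obj : V → Type} {st : QArr V → Type}

theorem my_updState_self (σ : GState st) (e : QArr V) (x : st e) :
    updState st σ e x e = x := by
  simp [updState]

theorem my_updState_other (σ : GState st) {e e' : QArr V} (x : st e) (h : e' ≠ e) :
    updState st σ e x e' = σ e' := by
  simp [updState, h]

theorem my_updState_id (σ : GState st) (e : QArr V) :
    updState st σ e (σ e) = σ := by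
  funext e'
  by_cases h : e' = e
  · subst h; simp [updState]
  · simp [updState, h]

theorem my_updState_updState (σ : GState st) (e : QArr V) (x y : st e) :
    updState st (updState st σ e x) e y = updState st σ e y := by
  funext e'
  by_cases h : e' = e
  · subst h; simp [updState]
  · simp [updState, h]

/-- `F` has "state support" contained in the list of arrows `L`. -/
def MySupp {α β : Type} (F : α × GState st → β × GState st) (L : List (QArr V)) : Prop :=
  (∀ x (σ σ' : GState st), (∀ e ∈ L, σ e = σ' e) →
      (F (x, σ)).1 = (F (x, σ')).1 ∧ ∀ e ∈ L, (F (x, σ)).2 e = (F (x, σ')).2 e) ∧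
  (∀ x (σ : GState st) e, e ∉ L → (F (x, σ)).2 e = σ e)

theorem my_supp_phiExt (φ : ∀ e : QArr V, obj e.1 × st e → obj e.2.1 × st e) (e : QArr V) :
    MySupp (phiExt obj st φ e) [e] := by
  constructor
  · intro x σ σ' h
    have he : σ e = σ' e := h e (List.mem_singleton_self e)
    constructor
    · simp [phiExt, he]
    · intro e' he'
      rw [List.mem_singleton] at he'
      subst he'
      simp [phiExt, my_updState_self, he]
  · intro x σ e' he'
    rw [List.mem_singleton] at he'
    exact my_updState_other σ _ he'

theorem my_supp_comp {α β γ : Type} {F : β × GState st → γ × GState st}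
    {G : α × GState st → β × GState st} {L L' : List (QArr V)}
    (hF : MySupp F L) (hG : MySupp G L') :
    MySupp (fun z => F (G z)) (L ++ L') := by
  constructor
  · intro x σ σ' h
    have h' : ∀ e ∈ L', σ e = σ' e := fun e he => h e (List.mem_append_right _ he)
    obtain ⟨hg1, hg2⟩ := hG.1 x σ σ' h'
    have hstate : ∀ e ∈ L ++ L', (G (x, σ)).2 e = (G (x, σ')).2 e := by
      intro e he
      by_cases hmem : e ∈ L'
      · exact hg2 e hmem
      · rw [hG.2 x σ e hmem, hG.2 x σ' e hmem]
        exact h e he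
    obtain ⟨hf1, hf2⟩ := hF.1 (G (x, σ)).1 (G (x, σ)).2 (G (x, σ')).2
      (fun e he => hstate e (List.mem_append_left _ he))
    constructor
    · show (F (G (x, σ))).1 = (F (G (x, σ'))).1
      calc (F (G (x, σ))).1 = (F ((G (x, σ)).1, (G (x, σ')).2)).1 := hf1
        _ = (F (G (x, σ'))).1 := by rw [hg1]
    · intro e he
      by_cases hmem : e ∈ L
      · show (F (G (x, σ))).2 e = (F (G (x, σ'))).2 e
        calc (F (G (x, σ))).2 e = (F ((G (x, σ)).1, (G (x, σ')).2)).2 e := hf2 e hmem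
          _ = (F (G (x, σ'))).2 e := by rw [hg1]
      · show (F (G (x, σ))).2 e = (F (G (x, σ'))).2 e
        rw [hF.2 (G (x, σ)).1 (G (x, σ)).2 e hmem, hF.2 (G (x, σ')).1 (G (x, σ')).2 e hmem]
        exact hstate e he
  · intro x σ e he
    rw [List.mem_append] at he
    push_neg at he
    show (F (G (x, σ))).2 e = σ e
    rw [hF.2 (G (x, σ)).1 (G (x, σ)).2 e he.1]
    exact hG.2 x σ e he.2

theorem my_supp_Phi (φ : ∀ e : QArr V, obj e.1 × st e → obj e.2.1 × st e)
    {u : V} : ∀ {v : V} (p : Quiver.Path u v), MySupp (Phi obj st φ p) (pathArrows p)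
  | _, .nil => by
    constructor
    · intro x σ σ' h
      exact ⟨rfl, fun e he => absurd he List.not_mem_nil⟩
    · intro x σ e he
      rfl
  | _, .cons q e =>
    my_supp_comp (my_supp_phiExt φ ⟨_, _, e⟩) (my_supp_Phi φ q)

theorem my_stmapAux_fst {α β : Type} {F : α × GState st → β × GState st} {L : List (QArr V)}
    (hF : MySupp F L) :
    ∀ (xs : List α) (σ σ' : GState st), (∀ e ∈ L, σ e = σ' e) →
      (stmapAux F xs σ).1 = (stmapAux F xs σ').1 ∧
      ∀ e ∈ L, (stmapAux F xs σ).2 e = (stmapAux F xs σ').2 e := by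
  intro xs
  induction xs with
  | nil => intro σ σ' h; exact ⟨rfl, h⟩
  | cons x xs ih =>
    intro σ σ' h
    obtain ⟨h1, h2⟩ := hF.1 x σ σ' h
    obtain ⟨ih1, ih2⟩ := ih (F (x, σ)).2 (F (x, σ')).2 h2
    simp only [stmapAux]
    exact ⟨by rw [h1, ih1], ih2⟩

theorem my_stmapAux_frozen {α β : Type} {F : α × GState st → β × GState st} {L : List (QArr V)}
    (hF : MySupp F L) :
    ∀ (xs : List α) (σ : GState st) (e : QArr V), e ∉ L → (stmapAux F xs σ).2 e = σ e := by
  intro xs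
  induction xs with
  | nil => intro σ e he; rfl
  | cons x xs ih =>
    intro σ e he
    simp only [stmapAux]
    rw [ih (F (x, σ)).2 e he]
    exact hF.2 x σ e he

theorem my_interchange {α β γ : Type} {F : β × GState st → γ × GState st}
    {G : α × GState st → β × GState st} {L L' : List (QArr V)}
    (hF : MySupp F L) (hG : MySupp G L') (hd : ∀ e ∈ L, e ∉ L') :
    ∀ (xs : List α) (σ σG σF : GState st),
      (∀ e ∈ L', σ e = σG e) → (∀ e ∈ L, σ e = σF e) →
      (stmapAux (fun z => F (G z)) xs σ).1 = (stmapAux F (stmapAux G xs σG).1 σF).1 ∧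
      (∀ e ∈ L', (stmapAux (fun z => F (G z)) xs σ).2 e = (stmapAux G xs σG).2 e) ∧
      (∀ e ∈ L, (stmapAux (fun z => F (G z)) xs σ).2 e = (stmapAux F (stmapAux G xs σG).1 σF).2 e) ∧
      (∀ e, e ∉ L → e ∉ L' → (stmapAux (fun z => F (G z)) xs σ).2 e = σ e) := by
  intro xs
  induction xs with
  | nil =>
    intro σ σG σF hG' hF'
    refine ⟨rfl, fun e he => hG' e he, fun e he => hF' e he, fun e _ _ => rfl⟩
  | cons x xs ih =>
    intro σ σG σF hG' hF'
    -- step through G and F on x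
    obtain ⟨hy, hs⟩ := hG.1 x σ σG hG'
    -- σ₁ := (G (x,σ)).2 agrees with σG₁ := (G (x,σG)).2 on L'
    have hσ₁F : ∀ e ∈ L, (G (x, σ)).2 e = σF e := by
      intro e he
      rw [hG.2 x σ e (hd e he)]
      exact hF' e he
    obtain ⟨hz, ht⟩ := hF.1 (G (x, σ)).1 (G (x, σ)).2 σF hσ₁F
    have hσ₂G : ∀ e ∈ L', (F (G (x, σ))).2 e = (G (x, σG)).2 e := by
      intro e he
      have heL : e ∉ L := fun hmem => hd e hmem he
      rw [hF.2 (G (x, σ)).1 (G (x, σ)).2 e heL]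
      exact hs e he
    have hσ₂F : ∀ e ∈ L, (F (G (x, σ))).2 e = (F ((G (x, σ)).1, σF)).2 e := fun e he => ht e he
    have hout : ∀ e, e ∉ L → e ∉ L' → (F (G (x, σ))).2 e = σ e := by
      intro e heL heL'
      rw [hF.2 (G (x, σ)).1 (G (x, σ)).2 e heL]
      exact hG.2 x σ e heL'
    obtain ⟨ih1, ih2, ih3, ih4⟩ := ih (F (G (x, σ))).2 (G (x, σG)).2 (F ((G (x, σ)).1, σF)).2
      hσ₂G hσ₂F
    simp only [stmapAux]
    have hz' : (F (G (x, σ))).1 = (F ((G (x, σG)).1, σF)).1 := by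
      rw [← hy]; exact hz
    refine ⟨?_, ?_, ?_, ?_⟩
    · rw [ih1, hy, hz']
    · intro e he
      exact ih2 e he
    · intro e he
      rw [ih3 e he, hy]
    · intro e heL heL'
      rw [ih4 e heL heL']
      exact hout e heL heL'

theorem my_stmap_comp {α β γ : Type} {F : β × GState st → γ × GState st}
    {G : α × GState st → β × GState st} {L L' : List (QArr V)}
    (hF : MySupp F L) (hG : MySupp G L') (hd : ∀ e ∈ L, e ∉ L') :
    stmap (fun z => F (G z)) = fun z => stmap F (stmap G z) := by
  funext z
  obtain ⟨xs, σ⟩ := z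
  obtain ⟨h1, h2, h3, h4⟩ := my_interchange hF hG hd xs σ σ σ (fun _ _ => rfl) (fun _ _ => rfl)
  have hgs : ∀ e ∈ L, (stmapAux G xs σ).2 e = σ e :=
    fun e he => my_stmapAux_frozen hG xs σ e (hd e he)
  obtain ⟨hf1, hf2⟩ := my_stmapAux_fst hF (stmapAux G xs σ).1 (stmapAux G xs σ).2 σ hgs
  show stmapAux (fun z => F (G z)) xs σ =
    stmapAux F (stmapAux G xs σ).1 (stmapAux G xs σ).2
  apply Prod.ext
  · rw [h1, hf1]
  · funext e
    by_cases heL : e ∈ L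
    · rw [h3 e heL, hf2 e heL]
    · by_cases heL' : e ∈ L'
      · rw [h2 e heL', my_stmapAux_frozen hF _ _ e heL]
      · rw [h4 e heL heL', my_stmapAux_frozen hF _ _ e heL,
          my_stmapAux_frozen hG _ _ e heL']

theorem my_stmapAux_phiExt (φ : ∀ e : QArr V, obj e.1 × st e → obj e.2.1 × st e) (e : QArr V) :
    ∀ (xs : List (obj e.1)) (σ : GState st),
      stmapAux (phiExt obj st φ e) xs σ =
        ((psiAux obj st φ e xs (σ e)).1, updState st σ e (psiAux obj st φ e xs (σ e)).2) := by
  intro xs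
  induction xs with
  | nil => intro σ; simp [stmapAux, psiAux, my_updState_id]
  | cons x xs ih =>
    intro σ
    simp only [stmapAux, psiAux, phiExt]
    rw [ih]
    rw [my_updState_self, my_updState_updState]

theorem my_psiExt_eq (φ : ∀ e : QArr V, obj e.1 × st e → obj e.2.1 × st e) (e : QArr V) :
    psiExt obj st φ e = stmap (phiExt obj st φ e) := by
  funext z
  obtain ⟨xs, σ⟩ := z
  show (_, _) = stmapAux (phiExt obj st φ e) xs σ
  rw [my_stmapAux_phiExt]
  rfl

theorem my_stmapAux_id {α : Type} :
    ∀ (xs : List α) (σ : GState st), stmapAux (fun z : α × GState st => z) xs σ = (xs, σ) := by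
  intro xs
  induction xs with
  | nil => intro σ; rfl
  | cons x xs ih => intro σ; simp only [stmapAux]; rw [ih]

theorem my_Psi_eq_stmap_Phi (φ : ∀ e : QArr V, obj e.1 × st e → obj e.2.1 × st e)
    {u : V} : ∀ {v : V} (p : Quiver.Path u v), SimplePath p →
      Psi obj st φ p = stmap (Phi obj st φ p)
  | _, .nil, _ => by
    funext z
    obtain ⟨xs, σ⟩ := z
    show (xs, σ) = stmapAux (fun z => z) xs σ
    rw [my_stmapAux_id]
  | _, .cons q e, hp => by
    have hp' : (⟨_, _, e⟩ : QArr V) ∉ pathArrows q ∧ (pathArrows q).Nodup := by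
      rw [SimplePath] at hp
      simpa [pathArrows, List.nodup_cons] using hp
    have hd : ∀ a ∈ ([⟨_, _, e⟩] : List (QArr V)), a ∉ pathArrows q := by
      intro a ha
      rw [List.mem_singleton] at ha
      subst ha
      exact hp'.1
    have hcomp := my_stmap_comp (my_supp_phiExt φ ⟨_, _, e⟩) (my_supp_Phi φ q) hd
    funext z
    show psiExt obj st φ ⟨_, _, e⟩ (Psi obj st φ q z) = _
    rw [my_Psi_eq_stmap_Phi φ q hp'.2, my_psiExt_eq]
    exact (congrFun hcomp z).symm

end MyAux

/-- on simple paths, the value of `Φ` fully determines the value of `Ψ`. -/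
theorem Phi_determines_Psi {V : Type} [Quiver.{0} V] (obj : V → Type) (st : QArr V → Type)
    (φ : ∀ e : QArr V, obj e.1 × st e → obj e.2.1 × st e)
    (u v : V) (p₁ p₂ : Quiver.Path u v) (h₁ : SimplePath p₁) (h₂ : SimplePath p₂)
    (h : Phi obj st φ p₁ = Phi obj st φ p₂) :
    Psi obj st φ p₁ = Psi obj st φ p₂ := by
  rw [my_Psi_eq_stmap_Phi φ p₁ h₁, my_Psi_eq_stmap_Phi φ p₂ h₂, h]
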